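/- For every integer n ≥ 2, one has Z(F_n + 1) = F_{n+2} + 1, where F_m denotes the m-th Fibonacci number. -/

import Mathlib

/-- A natural number is *fibbinary* if its binary representation
contains no two consecutive ones. -/
def IsFibbinary (m : ℕ) : Prop :=
  ∀ i : ℕ, ¬(m.testBit i = true ∧ m.testBit (i + 1) = true)

open scoped Classical

lemma isFibbinary_zero : IsFibbinary 0 := by
  intro i h; simp [Nat.zero_testBit] at h

lemma isFibbinary_two_pow (k : ℕ) : IsFibbinary (2 ^ k) := by
  intro i h
  rw [Nat.testBit_two_pow, Nat.testBit_two_pow] at h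
  simp at h
  omega

/-- bits of `2^k + r` when `r < 2^k`. -/
lemma testBit_pow_add {k r : ℕ} (hr : r < 2 ^ k) (i : ℕ) :
    (2 ^ k + r).testBit i = if i = k then true else r.testBit i := by
  rcases lt_trichotomy i k with h | h | h
  · rw [if_neg h.ne, Nat.testBit_two_pow_add_gt h]
  · subst h
    rw [if_pos rfl, Nat.testBit_two_pow_add_eq, Nat.testBit_lt_two_pow hr]
    rfl
  · rw [if_neg h.ne']
    rw [Nat.testBit_lt_two_pow, Nat.testBit_lt_two_pow]
    · exact hr.trans_le (Nat.pow_le_pow_right (by norm_num) h.le)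
    · calc 2 ^ k + r < 2 ^ k + 2 ^ k := by omega
        _ = 2 ^ (k + 1) := by ring
        _ ≤ 2 ^ i := Nat.pow_le_pow_right (by norm_num) h

lemma testBit_true_of_ge_of_lt {k m : ℕ} (h1 : 2 ^ k ≤ m) (h2 : m < 2 ^ (k + 1)) :
    m.testBit k = true := by
  rw [Nat.testBit_eq_decide_div_mod_eq]
  have : m / 2 ^ k = 1 := by
    rw [pow_succ] at h2
    exact Nat.div_eq_of_lt_le (by omega) (by omega)
  simp [this]

lemma upper_iff {k m : ℕ} (h1 : 2 ^ (k+1) ≤ m) (h2 : m < 2 ^ (k+2)) :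
    IsFibbinary m ↔ m - 2^(k+1) < 2^k ∧ IsFibbinary (m - 2^(k+1)) := by
  set r := m - 2^(k+1) with hrdef
  have hm : m = 2^(k+1) + r := by omega
  have hr1 : r < 2^(k+1) := by
    have : (2:ℕ)^(k+2) = 2^(k+1) + 2^(k+1) := by ring
    omega
  constructor
  · intro hf
    have hbit : m.testBit (k+1) = true := by
      rw [hm, testBit_pow_add hr1]; simp
    have hbk : r.testBit k = false := by
      by_contra hc
      have hmk : m.testBit k = true := by
        rw [hm, testBit_pow_add hr1, if_neg (by omega)]
        simpa using hc
      exact hf k ⟨hmk, hbit⟩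
    have hrk : r < 2^k := by
      by_contra hc
      push_neg at hc
      simp [testBit_true_of_ge_of_lt hc hr1] at hbk
    refine ⟨hrk, ?_⟩
    rintro i ⟨ha, hb⟩
    by_cases hik : i + 1 ≤ k
    · apply hf i
      constructor
      · rw [hm, testBit_pow_add hr1, if_neg (by omega)]; exact ha
      · rw [hm, testBit_pow_add hr1, if_neg (by omega)]; exact hb
    · have : r.testBit (i+1) = false :=
        Nat.testBit_lt_two_pow (hrk.trans_le (Nat.pow_le_pow_right (by norm_num) (by omega)))
      simp [this] at hb
  · rintro ⟨hrk, hf⟩ i ⟨ha, hb⟩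
    rw [hm, testBit_pow_add hr1] at ha hb
    by_cases hc1 : i + 1 < k + 1
    · rw [if_neg (by omega)] at ha hb
      exact hf i ⟨ha, hb⟩
    · by_cases hc2 : i + 1 = k + 1
      · have hik : i = k := by omega
        rw [if_neg (by omega), hik, Nat.testBit_lt_two_pow hrk] at ha
        simp at ha
      · rw [if_neg (by omega)] at hb
        have : r.testBit (i+1) = false :=
          Nat.testBit_lt_two_pow (hrk.trans_le (Nat.pow_le_pow_right (by norm_num) (by omega)))
        simp [this] at hb

lemma count_step (k : ℕ) :
    Nat.count IsFibbinary (2^(k+2)) = Nat.count IsFibbinary (2^(k+1)) + Nat.count IsFibbinary (2^k) := by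
  rw [Nat.count_eq_card_filter_range, Nat.count_eq_card_filter_range,
    Nat.count_eq_card_filter_range]
  have hsplit : (Finset.range (2^(k+2))).filter IsFibbinary
      = ((Finset.range (2^(k+1))).filter IsFibbinary) ∪
        (((Finset.range (2^k)).filter IsFibbinary).image (fun r => 2^(k+1) + r)) := by
    ext m
    simp only [Finset.mem_union, Finset.mem_filter, Finset.mem_range, Finset.mem_image]
    constructor
    · rintro ⟨hm2, hf⟩
      by_cases hlt : m < 2^(k+1)
      · exact Or.inl ⟨hlt, hf⟩
      · right
        push_neg at hlt
        obtain ⟨hr, hrf⟩ := (upper_iff hlt hm2).mp hf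
        exact ⟨m - 2^(k+1), ⟨hr, hrf⟩, by omega⟩
    · rintro (⟨hm, hf⟩ | ⟨r, ⟨hr, hrf⟩, rfl⟩)
      · exact ⟨hm.trans_le (Nat.pow_le_pow_right (by norm_num) (by omega)), hf⟩
      · have h1 : 2^(k+1) ≤ 2^(k+1) + r := by omega
        have hk : (2:ℕ)^(k+2) = 2^(k+1) + 2^(k+1) := by ring
        have hk2 : (2:ℕ)^(k+1) = 2^k + 2^k := by ring
        have h2 : 2^(k+1) + r < 2^(k+2) := by omega
        refine ⟨h2, (upper_iff h1 h2).mpr ?_⟩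
        simpa using ⟨hr, hrf⟩
  rw [hsplit, Finset.card_union_of_disjoint, Finset.card_image_of_injective _ (fun a b h => by omega)]
  rw [Finset.disjoint_left]
  rintro a ha hb
  simp only [Finset.mem_filter, Finset.mem_range, Finset.mem_image] at ha hb
  obtain ⟨r, _, rfl⟩ := hb
  omega

lemma count_pow (k : ℕ) : Nat.count IsFibbinary (2^k) = Nat.fib (k+2) := by
  induction k using Nat.strong_induction_on with
  | _ k ih =>
    match k with
    | 0 =>
      show Nat.count IsFibbinary 1 = 1
      rw [Nat.count_succ, Nat.count_zero, if_pos isFibbinary_zero]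
    | 1 =>
      show Nat.count IsFibbinary 2 = 2
      rw [Nat.count_succ, Nat.count_succ, Nat.count_zero, if_pos isFibbinary_zero,
        if_pos (by simpa using isFibbinary_two_pow 0)]
    | (j+2) =>
      rw [count_step, ih (j+1) (by omega), ih j (by omega)]
      have h : Nat.fib (j+2+2) = Nat.fib (j+2) + Nat.fib (j+1+2) := by
        rw [Nat.fib_add_two, show j+2+1 = j+1+2 by omega]
      omega

lemma testBit_four_mul_add_one (r : ℕ) :
    (4*r+1).testBit 0 = true ∧ (4*r+1).testBit 1 = false ∧
    ∀ i, (4*r+1).testBit (i+2) = r.testBit i := by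
  have h1 : (4*r+1)/2 = 2*r := by omega
  have h2 : (2*r)/2 = r := by omega
  refine ⟨?_, ?_, ?_⟩
  · rw [Nat.testBit_zero]
    simp
    omega
  · rw [show (1:ℕ) = 0 + 1 from rfl, Nat.testBit_add_one, h1, Nat.testBit_zero]
    simp
  · intro i
    rw [show i+2 = (i+1)+1 from rfl, Nat.testBit_add_one, h1, Nat.testBit_add_one, h2]

lemma Q_of_P {r : ℕ} (hf : IsFibbinary r) : Odd (4*r+1) ∧ IsFibbinary (4*r+1) := by
  obtain ⟨h0, h1, h2⟩ := testBit_four_mul_add_one r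
  refine ⟨⟨2*r, by ring⟩, ?_⟩
  rintro i ⟨ha, hb⟩
  match i with
  | 0 => rw [h1] at hb; exact absurd hb (by simp)
  | 1 => rw [h1] at ha; exact absurd ha (by simp)
  | (j+2) =>
    refine hf j ⟨by rwa [h2 j] at ha, ?_⟩
    rwa [show j+2+1 = (j+1)+2 from rfl, h2 (j+1)] at hb

lemma P_of_Q {m : ℕ} (ho : Odd m) (hf : IsFibbinary m) :
    m = 4*(m/4)+1 ∧ IsFibbinary (m/4) := by
  have hm2 : m % 2 = 1 := Nat.odd_iff.mp ho
  have hb0 : m.testBit 0 = true := by rw [Nat.testBit_zero]; simp [hm2]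
  have hb1 : m.testBit 1 = false := by
    rcases Bool.eq_false_or_eq_true (m.testBit 1) with h | h
    · exact absurd (hf 0 ⟨hb0, h⟩) (by simp)
    · exact h
  have hd : (m/2) % 2 = 0 := by
    rw [show (1:ℕ) = 0 + 1 from rfl, Nat.testBit_add_one, Nat.testBit_zero] at hb1
    simp at hb1
    omega
  have key : ∀ i, m.testBit (i+2) = (m/4).testBit i := by
    intro i
    rw [show i+2 = (i+1)+1 from rfl, Nat.testBit_add_one, Nat.testBit_add_one,
      Nat.div_div_eq_div_mul]
  refine ⟨by omega, ?_⟩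
  rintro i ⟨ha, hb⟩
  refine hf (i+2) ⟨by rw [key]; exact ha, ?_⟩
  rw [show i+2+1 = (i+1)+2 from rfl, key]
  exact hb

lemma count_odd (t : ℕ) :
    Nat.count (fun m => Odd m ∧ IsFibbinary m) (4*t+1) = Nat.count IsFibbinary t := by
  rw [Nat.count_eq_card_filter_range, Nat.count_eq_card_filter_range]
  have hsplit : (Finset.range (4*t+1)).filter (fun m => Odd m ∧ IsFibbinary m)
      = ((Finset.range t).filter IsFibbinary).image (fun r => 4*r+1) := by
    ext m
    simp only [Finset.mem_filter, Finset.mem_range, Finset.mem_image]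
    constructor
    · rintro ⟨hm, ho, hf⟩
      obtain ⟨hm4, hf4⟩ := P_of_Q ho hf
      exact ⟨m/4, ⟨by omega, hf4⟩, by omega⟩
    · rintro ⟨r, ⟨hr, hrf⟩, rfl⟩
      obtain ⟨ho, hf⟩ := Q_of_P hrf
      exact ⟨by omega, ho, hf⟩
  rw [hsplit, Finset.card_image_of_injective _ (fun a b h => by omega)]

lemma P_infinite : (setOf IsFibbinary).Infinite :=
  Set.infinite_of_injective_forall_mem (f := fun k : ℕ => 2^k)
    (fun a b h => Nat.pow_right_injective (le_refl 2) h) (fun k => isFibbinary_two_pow k)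

lemma P'_infinite : {m | 0 < m ∧ IsFibbinary m}.Infinite :=
  Set.infinite_of_injective_forall_mem (f := fun k : ℕ => 2^k)
    (fun a b h => Nat.pow_right_injective (le_refl 2) h)
    (fun k => ⟨pow_pos (by norm_num) k, isFibbinary_two_pow k⟩)

lemma Q_infinite : {m | Odd m ∧ IsFibbinary m}.Infinite :=
  Set.infinite_of_injective_forall_mem (f := fun k : ℕ => 4*2^k+1)
    (fun a b h => by
      dsimp only at h
      have h2 : (2:ℕ)^a = 2^b := by omega
      exact Nat.pow_right_injective (le_refl 2) h2)
    (fun k => Q_of_P (isFibbinary_two_pow k))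

lemma nth_Q_eq (k : ℕ) :
    Nat.nth (fun m => Odd m ∧ IsFibbinary m) k = 4 * Nat.nth IsFibbinary k + 1 := by
  have ht := Nat.nth_mem_of_infinite P_infinite k
  have hc : Nat.count (fun m => Odd m ∧ IsFibbinary m) (4 * Nat.nth IsFibbinary k + 1) = k := by
    rw [count_odd, Nat.count_nth_of_infinite P_infinite]
  have h2 := Nat.nth_count (p := fun m => Odd m ∧ IsFibbinary m) (Q_of_P ht)
  rw [hc] at h2
  exact h2

lemma count_P' {n : ℕ} (hn : 1 ≤ n) :
    Nat.count (fun m => 0 < m ∧ IsFibbinary m) n + 1 = Nat.count IsFibbinary n := by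
  rw [Nat.count_eq_card_filter_range, Nat.count_eq_card_filter_range]
  have hsplit : (Finset.range n).filter (fun x => IsFibbinary x)
      = insert 0 ((Finset.range n).filter (fun x => 0 < x ∧ IsFibbinary x)) := by
    ext m
    simp only [Finset.mem_filter, Finset.mem_range, Finset.mem_insert]
    constructor
    · rintro ⟨hm, hf⟩
      rcases Nat.eq_zero_or_pos m with h | h
      · exact Or.inl h
      · exact Or.inr ⟨hm, h, hf⟩
    · rintro (rfl | ⟨hm, _, hf⟩)
      · exact ⟨hn, isFibbinary_zero⟩
      · exact ⟨hm, hf⟩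
  rw [hsplit, Finset.card_insert_of_notMem (by simp)]

lemma nth_P'_eq (k : ℕ) :
    Nat.nth (fun m => 0 < m ∧ IsFibbinary m) k = Nat.nth IsFibbinary (k+1) := by
  have hm := Nat.nth_mem_of_infinite P'_infinite k
  have hc : Nat.count IsFibbinary (Nat.nth (fun m => 0 < m ∧ IsFibbinary m) k) = k + 1 := by
    rw [← count_P' hm.1, Nat.count_nth_of_infinite P'_infinite]
  have h2 := Nat.nth_count hm.2
  rw [hc] at h2
  exact h2.symm

/-- `fibbin n` is the `n`-th fibbinary number, i.e. the `n`-th positive integer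
(1-indexed, in increasing order) whose binary representation has no two
consecutive ones. -/
noncomputable def fibbin (n : ℕ) : ℕ :=
  Nat.nth (fun m => 0 < m ∧ IsFibbinary m) (n - 1)

/-- `odfib n` is the `n`-th odd fibbinary number
(1-indexed, in increasing order). -/
noncomputable def odfib (n : ℕ) : ℕ :=
  Nat.nth (fun m => Odd m ∧ IsFibbinary m) (n - 1)

/-- `Z n` is the index `j` such that the `j`-th fibbinary number equals the
`n`-th odd fibbinary number, i.e. `Z n = fibbin⁻¹ (odfib n)`. -/
noncomputable def Z (n : ℕ) : ℕ :=
  sInf {j : ℕ | 1 ≤ j ∧ fibbin j = odfib n}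

lemma isFibbinary_two_pow_add_one {k : ℕ} (hk : 2 ≤ k) : IsFibbinary (2^k + 1) := by
  have h1 : (1:ℕ) < 2^k := by
    calc (1:ℕ) < 2^2 := by norm_num
    _ ≤ 2^k := Nat.pow_le_pow_right (by norm_num) hk
  rintro i ⟨ha, hb⟩
  rw [testBit_pow_add h1] at ha hb
  by_cases hik : i = k
  · rw [if_neg (by omega)] at hb
    have : Nat.testBit 1 (i+1) = false := Nat.testBit_lt_two_pow (by
      have : (1:ℕ) < 2^(i+1) := Nat.one_lt_two_pow (by omega)
      omega)
    simp [this] at hb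
  · rw [if_neg hik] at ha
    have hi0 : i = 0 := by
      by_contra h0
      have : Nat.testBit 1 i = false := Nat.testBit_lt_two_pow (Nat.one_lt_two_pow h0)
      simp [this] at ha
    subst hi0
    rw [if_neg (by omega)] at hb
    exact absurd hb (by decide)


/-- For `n ≥ 2`, `Z (F_n + 1) = F_{n+2} + 1`. -/
theorem Z_fib_add_one (n : ℕ) (hn : 2 ≤ n) :
    Z (Nat.fib n + 1) = Nat.fib (n + 2) + 1 := by
  obtain ⟨k, rfl⟩ : ∃ k, n = k + 2 := ⟨n - 2, by omega⟩
  have hpow : 4 * 2^k + 1 = 2^(k+2) + 1 := by ring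
  have hodf : odfib (Nat.fib (k+2) + 1) = 2^(k+2) + 1 := by
    unfold odfib
    rw [Nat.add_sub_cancel, nth_Q_eq]
    have h1 : Nat.nth IsFibbinary (Nat.fib (k+2)) = 2^k := by
      have h := Nat.nth_count (p := IsFibbinary) (isFibbinary_two_pow k)
      rwa [count_pow] at h
    rw [h1, hpow]
  have hP : IsFibbinary (2^(k+2) + 1) := isFibbinary_two_pow_add_one (by omega)
  have hcount : Nat.count IsFibbinary (2^(k+2) + 1) = Nat.fib (k+2+2) + 1 := by
    rw [Nat.count_succ, count_pow, if_pos (isFibbinary_two_pow _)]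
  have hfibbin : fibbin (Nat.fib (k+2+2) + 1) = 2^(k+2) + 1 := by
    unfold fibbin
    rw [Nat.add_sub_cancel, nth_P'_eq]
    have h := Nat.nth_count (p := IsFibbinary) hP
    rwa [hcount] at h
  have hset : {j : ℕ | 1 ≤ j ∧ fibbin j = odfib (Nat.fib (k+2) + 1)}
      = {Nat.fib (k+2+2) + 1} := by
    ext j
    simp only [Set.mem_setOf_eq, Set.mem_singleton_iff]
    constructor
    · rintro ⟨hj, he⟩
      rw [hodf, ← hfibbin] at he
      unfold fibbin at he
      have hinj := Nat.nth_injective P'_infinite he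
      omega
    · rintro rfl
      exact ⟨by omega, by rw [hfibbin, hodf]⟩
  unfold Z
  rw [hset, csInf_singleton]
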